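/- arXiv:math/0105109 — 2 statements merged into one kernel-verified Lean document; each statement's English description precedes it below -/
import Mathlib

section
/- The nilpotent shift matrix Ξ_N converges in *-moments to a Haar unitary: for any word s_1,…,s_n ∈ {1,*}, the normalized trace tr_N(Ξ_N^{s_1}⋯Ξ_N^{s_n}) converges as N → ∞ to the corresponding *-moment of a Haar unitary, i.e. to 1 if the word reduces (using u*u = uu* = 1) to the identity and the signed exponent sum is 0, and otherwise is within O(1/N) of 0; in particular |tr_N(Ξ_N^{s_1}⋯Ξ_N^{s_n}) − μ(s)| ≤ n/N where μ(s) is the Haar unitary *-moment. -/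
open Matrix

/-- The `N × N` nilpotent shift matrix: `(Ξ_N)_{ij} = 1` if `i = j + 1`, else `0`. -/
def shiftMatrix (N : ℕ) : Matrix (Fin N) (Fin N) ℂ :=
  Matrix.of fun i j => if (i : ℕ) = (j : ℕ) + 1 then 1 else 0

attribute [local instance] Classical.propDecidable

namespace ShiftAux

def eps (b : Bool) : ℤ := if b then -1 else 1

def sigma (L : List Bool) : ℤ := (L.map eps).sum

lemma sigma_nil : sigma [] = 0 := rfl

lemma sigma_cons (b : Bool) (L : List Bool) : sigma (b :: L) = eps b + sigma L := by
  simp [sigma]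

lemma sigma_append (l1 l2 : List Bool) : sigma (l1 ++ l2) = sigma l1 + sigma l2 := by
  simp [sigma]

lemma abs_sigma_le (L : List Bool) : |sigma L| ≤ (L.length : ℤ) := by
  induction L with
  | nil => simp [sigma]
  | cons b L ih =>
    have hb : |eps b| = 1 := by cases b <;> simp [eps]
    calc |sigma (b :: L)| ≤ |eps b| + |sigma L| := by
          rw [sigma_cons]; exact abs_add_le _ _
      _ ≤ 1 + L.length := by rw [hb]; omega
      _ = ((b :: L).length : ℤ) := by simp; ring

def matOf (N : ℕ) (b : Bool) : Matrix (Fin N) (Fin N) ℂ :=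
  if b then (shiftMatrix N)ᴴ else shiftMatrix N

lemma matOf_apply (N : ℕ) (b : Bool) (i k : Fin N) :
    matOf N b i k = if (i : ℤ) = (k : ℤ) + eps b then 1 else 0 := by
  cases b with
  | false =>
    rw [matOf, if_neg (by simp)]
    simp only [shiftMatrix, of_apply, eps, Bool.false_eq_true, if_false]
    split_ifs with h1 h2 h2
    · rfl
    · exfalso; omega
    · exfalso; omega
    · rfl
  | true =>
    rw [matOf, if_pos rfl, conjTranspose_apply]
    simp only [shiftMatrix, of_apply, eps, if_true]
    split_ifs with h1 h2 h2
    · exact star_one ℂ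
    · exfalso; omega
    · exfalso; omega
    · exact star_zero ℂ

def good (N : ℕ) (L : List Bool) (j : ℤ) : Prop :=
  ∀ t ∈ L.tails, 0 ≤ j + sigma t ∧ j + sigma t < N

lemma prod_entry (N : ℕ) (L : List Bool) (i j : Fin N) :
    (L.map (matOf N)).prod i j =
      if ((i : ℤ) = (j : ℤ) + sigma L ∧ good N L j) then 1 else 0 := by
  induction L generalizing i with
  | nil =>
    have hg : good N [] j := by
      intro t ht
      rw [List.mem_tails, List.suffix_nil] at ht
      subst ht
      simp only [sigma_nil, add_zero]
      exact ⟨Int.natCast_nonneg _, by exact_mod_cast j.2⟩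
    simp only [List.map_nil, List.prod_nil, Matrix.one_apply, sigma_nil, add_zero]
    by_cases h : i = j
    · subst h; rw [if_pos rfl, if_pos ⟨rfl, hg⟩]
    · rw [if_neg h, if_neg]
      rintro ⟨h1, -⟩
      exact h (Fin.ext (by exact_mod_cast h1))
  | cons b L ih =>
    rw [List.map_cons, List.prod_cons, Matrix.mul_apply]
    by_cases hc : good N L j
    · have hrange := hc L (by rw [List.mem_tails])
      have hv0 : 0 ≤ (j : ℤ) + sigma L := hrange.1
      have hvN : (j : ℤ) + sigma L < N := hrange.2
      obtain ⟨k0, hk0⟩ : ∃ k0 : Fin N, (k0 : ℤ) = (j : ℤ) + sigma L :=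
        ⟨⟨((j : ℤ) + sigma L).toNat, by omega⟩, Int.toNat_of_nonneg hv0⟩
      rw [Finset.sum_eq_single_of_mem k0 (Finset.mem_univ k0) ?side]
      case side =>
        intro k _ hk
        rw [ih, if_neg, mul_zero]
        rintro ⟨h1, -⟩
        exact hk (Fin.ext (by omega))
      rw [ih, if_pos ⟨hk0, hc⟩, mul_one, matOf_apply]
      by_cases h : (i : ℤ) = (k0 : ℤ) + eps b
      · rw [if_pos h, if_pos]
        refine ⟨by rw [h, hk0, sigma_cons]; ring, ?_⟩
        intro t ht
        rw [List.mem_tails, List.suffix_cons_iff] at ht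
        rcases ht with rfl | ht
        · rw [sigma_cons]
          have heq : (j : ℤ) + (eps b + sigma L) = (i : ℤ) := by rw [h, hk0]; ring
          rw [heq]
          exact ⟨Int.natCast_nonneg _, by exact_mod_cast i.2⟩
        · exact hc t (by rw [List.mem_tails]; exact ht)
      · rw [if_neg h, if_neg]
        rintro ⟨h1, -⟩
        exact h (by rw [h1, hk0, sigma_cons]; ring)
    · rw [Finset.sum_eq_zero, if_neg]
      · rintro ⟨-, hg⟩
        refine hc fun t ht => hg t ?_
        rw [List.mem_tails] at ht ⊢
        exact ht.trans (List.suffix_cons b L)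
      · intro k _
        rw [ih, if_neg (fun h => hc h.2), mul_zero]

lemma card_filter_lt_le (N c : ℕ) :
    (Finset.univ.filter (fun j : Fin N => j.val < c)).card ≤ c := by
  calc (Finset.univ.filter (fun j : Fin N => j.val < c)).card
      ≤ (Finset.range c).card := by
        apply Finset.card_le_card_of_injOn (fun j => j.val)
        · intro j hj; simp only [Finset.mem_coe, Finset.mem_filter] at hj; simpa using hj.2
        · intro a _ b _ h; exact Fin.ext h
    _ = c := Finset.card_range c

lemma card_filter_ge_le (N c : ℕ) :
    (Finset.univ.filter (fun j : Fin N => c ≤ j.val)).card ≤ N - c := by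
  calc (Finset.univ.filter (fun j : Fin N => c ≤ j.val)).card
      ≤ (Finset.range (N - c)).card := by
        apply Finset.card_le_card_of_injOn (fun j => j.val - c)
        · intro j hj
          simp only [Finset.mem_coe, Finset.mem_filter] at hj
          have := j.2
          simp only [Finset.mem_coe, Finset.mem_range]
          omega
        · intro a ha b hb h
          simp only [Finset.mem_coe, Finset.mem_filter, Finset.mem_univ, true_and] at ha hb
          dsimp only at h
          exact Fin.ext (by omega)
    _ = N - c := Finset.card_range _

lemma card_good (N : ℕ) (L : List Bool) :
    N ≤ (Finset.univ.filter (fun j : Fin N => good N L (j : ℤ))).card + L.length := by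
  set S : Finset ℤ := (L.tails.map sigma).toFinset with hS
  have h0S : (0 : ℤ) ∈ S := by
    rw [hS, List.mem_toFinset, List.mem_map]
    exact ⟨[], by rw [List.mem_tails]; exact List.nil_suffix, rfl⟩
  have hSne : S.Nonempty := ⟨0, h0S⟩
  set M : ℤ := S.max' hSne with hMdef
  set m : ℤ := S.min' hSne with hmdef
  have hM0 : 0 ≤ M := S.le_max' 0 h0S
  have hm0 : m ≤ 0 := S.min'_le 0 h0S
  have hmem : ∀ t ∈ L.tails, m ≤ sigma t ∧ sigma t ≤ M := by
    intro t ht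
    have hmem : sigma t ∈ S := by
      rw [hS, List.mem_toFinset, List.mem_map]; exact ⟨t, ht, rfl⟩
    exact ⟨S.min'_le _ hmem, S.le_max' _ hmem⟩
  have hMm : M - m ≤ (L.length : ℤ) := by
    obtain ⟨t1, ht1, ht1v⟩ := List.mem_map.mp (List.mem_toFinset.mp (S.max'_mem hSne))
    obtain ⟨t2, ht2, ht2v⟩ := List.mem_map.mp (List.mem_toFinset.mp (S.min'_mem hSne))
    rw [List.mem_tails] at ht1 ht2
    rcases List.suffix_or_suffix_of_suffix ht1 ht2 with h | h
    · obtain ⟨c, rfl⟩ := h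
      have h1 : sigma (c ++ t1) = sigma c + sigma t1 := sigma_append c t1
      have h2 : |sigma c| ≤ (c.length : ℤ) := abs_sigma_le c
      have h3 : (c ++ t1).length ≤ L.length := ht2.length_le
      have h4 : |sigma c| ≤ (L.length : ℤ) := le_trans h2 (by simp at h3 ⊢; omega)
      rw [abs_le] at h4
      omega
    · obtain ⟨c, rfl⟩ := h
      have h1 : sigma (c ++ t2) = sigma c + sigma t2 := sigma_append c t2
      have h2 : |sigma c| ≤ (c.length : ℤ) := abs_sigma_le c
      have h3 : (c ++ t2).length ≤ L.length := ht1.length_le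
      have h4 : |sigma c| ≤ (L.length : ℤ) := le_trans h2 (by simp at h3 ⊢; omega)
      rw [abs_le] at h4
      omega
  have hbad : (Finset.univ.filter (fun j : Fin N => ¬ good N L (j : ℤ))).card ≤ L.length := by
    have hsub : (Finset.univ.filter (fun j : Fin N => ¬ good N L (j : ℤ)))
        ⊆ (Finset.univ.filter (fun j : Fin N => j.val < (-m).toNat))
          ∪ (Finset.univ.filter (fun j : Fin N => N - M.toNat ≤ j.val)) := by
      intro j hj
      simp only [Finset.mem_filter, Finset.mem_univ, true_and] at hj
      unfold good at hj
      push_neg at hj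
      obtain ⟨t, ht, hcond⟩ := hj
      have hmt := hmem t ht
      rw [Finset.mem_union]
      simp only [Finset.mem_filter, Finset.mem_univ, true_and]
      by_cases h : 0 ≤ (j : ℤ) + sigma t
      · right
        have := hcond h
        omega
      · left
        omega
    calc (Finset.univ.filter (fun j : Fin N => ¬ good N L (j : ℤ))).card
        ≤ _ := Finset.card_le_card hsub
      _ ≤ _ := Finset.card_union_le _ _
      _ ≤ (-m).toNat + (N - (N - M.toNat)) := by
          have := card_filter_lt_le N (-m).toNat
          have := card_filter_ge_le N (N - M.toNat)
          omega
      _ ≤ L.length := by omega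
  have hall := Finset.card_filter_add_card_filter_not
    (s := (Finset.univ : Finset (Fin N))) (p := fun j : Fin N => good N L (j : ℤ))
  simp only [Finset.card_univ, Fintype.card_fin] at hall
  omega

end ShiftAux

/-- `Ξ_N` converges in `*`-moments to a Haar unitary: for any word
`s : Fin n → Bool` (with `true` meaning `*`), the normalized trace of the
corresponding word in `Ξ_N, Ξ_Nᴴ` is within `n/N` of the Haar unitary
`*`-moment, which is `1` if the signed exponent sum vanishes and `0` otherwise. -/
theorem shiftMatrix_starMoments_haarUnitary (N : ℕ) (hN : 0 < N) (n : ℕ) (s : Fin n → Bool) :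
    ‖(List.ofFn fun i : Fin n =>
            if s i then (shiftMatrix N)ᴴ else shiftMatrix N).prod.trace / (N : ℂ)
          - (if (∑ i : Fin n, (if s i then (-1 : ℤ) else 1)) = 0 then (1 : ℂ) else 0)‖
      ≤ (n : ℝ) / N := by
  set L : List Bool := List.ofFn s with hL
  have hlist : (List.ofFn fun i : Fin n =>
      if s i then (shiftMatrix N)ᴴ else shiftMatrix N) = L.map (ShiftAux.matOf N) := by
    rw [hL, List.map_ofFn]
    rfl
  have hsum : (∑ i : Fin n, (if s i then (-1 : ℤ) else 1)) = ShiftAux.sigma L := by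
    rw [hL]
    unfold ShiftAux.sigma
    rw [List.map_ofFn, List.sum_ofFn]
    rfl
  rw [hlist, hsum]
  have hlen : L.length = n := by rw [hL, List.length_ofFn]
  rw [Matrix.trace]
  have hdiag : ∀ j : Fin N, (L.map (ShiftAux.matOf N)).prod.diag j =
      if (ShiftAux.sigma L = 0 ∧ ShiftAux.good N L (j : ℤ)) then 1 else 0 := by
    intro j
    rw [Matrix.diag_apply, ShiftAux.prod_entry]
    exact if_congr ⟨fun ⟨h1, h2⟩ => ⟨by omega, h2⟩, fun ⟨h1, h2⟩ => ⟨by omega, h2⟩⟩ rfl rfl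
  by_cases hσ : ShiftAux.sigma L = 0
  · rw [if_pos hσ]
    have hsum2 : (∑ j : Fin N, (L.map (ShiftAux.matOf N)).prod.diag j) =
        ((Finset.univ.filter (fun j : Fin N => ShiftAux.good N L (j : ℤ))).card : ℂ) := by
      rw [Finset.sum_congr rfl fun j _ => hdiag j]
      simp only [hσ, true_and]
      rw [Finset.sum_boole]
    rw [hsum2]
    set c : ℕ := (Finset.univ.filter (fun j : Fin N => ShiftAux.good N L (j : ℤ))).card with hc
    have hcN : c ≤ N := le_trans (Finset.card_filter_le _ _) (by simp)
    have hNc : N ≤ c + n := by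
      have := ShiftAux.card_good N L
      omega
    have hNne : (N : ℂ) ≠ 0 := by exact_mod_cast hN.ne'
    have heq : (c : ℂ) / N - 1 = (((c : ℝ) - N) / N : ℝ) := by
      push_cast
      field_simp
    have hle : (c : ℝ) - N ≤ 0 := sub_nonpos.mpr (by exact_mod_cast hcN)
    rw [heq, Complex.norm_real, Real.norm_eq_abs, abs_div,
      abs_of_nonneg (by positivity : (0:ℝ) ≤ (N:ℝ)), abs_of_nonpos hle]
    have h2 : (N : ℝ) ≤ (c : ℝ) + n := by exact_mod_cast hNc
    gcongr
    linarith
  · rw [if_neg hσ]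
    have hz : (∑ j : Fin N, (L.map (ShiftAux.matOf N)).prod.diag j) = 0 := by
      rw [Finset.sum_congr rfl fun j _ => hdiag j]
      simp [hσ]
    rw [hz]
    simp only [zero_div, sub_zero, norm_zero]
    positivity
end

section
/- For every ε > 0 and every M > 0 there exists an even real polynomial Q such that log r ≤ Q(r) for every r > 0, and Q(r) ≤ (1/2)·log(r² + ε) for every r ∈ [0, M]. -/
open Polynomial Real

lemma poly_abs_eval_le (p : ℝ[X]) {t : ℝ} (ht : 1 ≤ t) :
    |p.eval t| ≤ (∑ i ∈ Finset.range (p.natDegree + 1), |p.coeff i|) * t ^ p.natDegree := by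
  have ht0 : (0:ℝ) ≤ t := le_trans zero_le_one ht
  rw [Polynomial.eval_eq_sum_range]
  calc |∑ i ∈ Finset.range (p.natDegree + 1), p.coeff i * t ^ i|
      ≤ ∑ i ∈ Finset.range (p.natDegree + 1), |p.coeff i * t ^ i| :=
        Finset.abs_sum_le_sum_abs _ _
    _ ≤ ∑ i ∈ Finset.range (p.natDegree + 1), |p.coeff i| * t ^ p.natDegree := by
        apply Finset.sum_le_sum
        intro i hi
        rw [abs_mul, abs_pow, abs_of_nonneg ht0]
        exact mul_le_mul_of_nonneg_left
          (pow_le_pow_right₀ ht (Nat.lt_succ_iff.mp (Finset.mem_range.mp hi)))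
          (abs_nonneg _)
    _ = _ := by rw [← Finset.sum_mul]

lemma key_poly (ε M : ℝ) (hε : 0 < ε) (hM : 0 < M) :
    ∃ P : ℝ[X],
      (∀ t : ℝ, 0 < t → Real.log t / 2 ≤ P.eval t) ∧
      (∀ t ∈ Set.Icc (0:ℝ) (M^2), P.eval t ≤ Real.log (t + ε) / 2) := by
  set C : ℝ := M ^ 2 + 1 with hC
  have hM2 : (0:ℝ) < M ^ 2 := by positivity
  have hC1 : (1:ℝ) ≤ C := by nlinarith
  have hC0 : (0:ℝ) < C := by nlinarith
  have hMC : M ^ 2 < C := by nlinarith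
  set m : ℝ := Real.log ((C + ε) / (C + ε / 2)) / 2 with hm
  have hden : (0:ℝ) < C + ε / 2 := by nlinarith
  have hmpos : 0 < m := by
    have h : 1 < (C + ε) / (C + ε / 2) := by
      rw [lt_div_iff₀ hden]; nlinarith
    have := Real.log_pos h
    positivity
  have mlow : ∀ t : ℝ, 0 < t → t ≤ C → Real.log t / 2 + m ≤ Real.log (t + ε / 2) / 2 := by
    intro t ht htC
    have h1 : (C + ε) / (C + ε / 2) ≤ (t + ε / 2) / t := by
      rw [div_le_div_iff₀ hden ht]; nlinarith
    have h2 : Real.log ((C + ε) / (C + ε / 2)) ≤ Real.log ((t + ε / 2) / t) :=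
      Real.log_le_log (by positivity) h1
    rw [Real.log_div (by nlinarith) (ne_of_gt ht)] at h2
    rw [hm]; linarith
  have mup : ∀ t : ℝ, 0 ≤ t → t ≤ M ^ 2 →
      Real.log (t + ε / 2) / 2 + m ≤ Real.log (t + ε) / 2 := by
    intro t ht htM
    have hden2 : (0:ℝ) < t + ε / 2 := by nlinarith
    have h1 : (C + ε) / (C + ε / 2) ≤ (t + ε) / (t + ε / 2) := by
      rw [div_le_div_iff₀ hden hden2]; nlinarith
    have h2 : Real.log ((C + ε) / (C + ε / 2)) ≤ Real.log ((t + ε) / (t + ε / 2)) :=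
      Real.log_le_log (by positivity) h1
    rw [Real.log_div (by nlinarith) (ne_of_gt hden2)] at h2
    rw [hm]; linarith
  have hcont : ContinuousOn (fun t : ℝ => Real.log (t + ε / 2) / 2) (Set.Icc 0 C) := by
    apply ContinuousOn.div_const
    apply ContinuousOn.log
    · exact continuousOn_id.add continuousOn_const
    · intro x hx
      have h1 : (0:ℝ) ≤ x := hx.1
      have h2 : (0:ℝ) < x + ε / 2 := by nlinarith
      exact ne_of_gt h2
  obtain ⟨p, hp⟩ := exists_polynomial_near_of_continuousOn 0 C
    (fun t : ℝ => Real.log (t + ε / 2) / 2) hcont (m / 2) (by positivity)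
  set d : ℕ := p.natDegree with hd
  set A : ℝ := ∑ i ∈ Finset.range (d + 1), |p.coeff i| with hA
  have hA0 : 0 ≤ A := Finset.sum_nonneg fun i _ => abs_nonneg _
  set K : ℝ := (A + 1) * C ^ (d + 1) with hK
  have hK0 : 0 < K := by positivity
  have hq : M ^ 2 / C < 1 := (div_lt_one hC0).mpr hMC
  have hq0 : 0 ≤ M ^ 2 / C := by positivity
  obtain ⟨n0, hn0⟩ := exists_pow_lt_of_lt_one (show (0:ℝ) < m / 2 / K by positivity) hq
  set n : ℕ := max n0 (d + 1) with hn
  have hnd : d + 1 ≤ n := le_max_right _ _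
  have hsmall : K * (M ^ 2 / C) ^ n ≤ m / 2 := by
    have h1 : (M ^ 2 / C) ^ n ≤ (M ^ 2 / C) ^ n0 :=
      pow_le_pow_of_le_one hq0 (le_of_lt hq) (le_max_left _ _)
    have h3 : K * (M ^ 2 / C) ^ n ≤ K * (m / 2 / K) :=
      mul_le_mul_of_nonneg_left (le_of_lt (lt_of_le_of_lt h1 hn0)) (le_of_lt hK0)
    have h4 : K * (m / 2 / K) = m / 2 := by field_simp
    linarith
  have hCn : (0:ℝ) < C ^ n := by positivity
  clear_value C m A K n
  refine ⟨p + Polynomial.C (K / C ^ n) * Polynomial.X ^ n, ?_, ?_⟩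
  · intro t ht
    have heval : (p + Polynomial.C (K / C ^ n) * Polynomial.X ^ n).eval t
        = p.eval t + K * (t / C) ^ n := by
      rw [Polynomial.eval_add, Polynomial.eval_mul, Polynomial.eval_C, Polynomial.eval_pow,
        Polynomial.eval_X, div_pow]
      ring
    rw [heval]
    rcases le_or_gt t C with htC | htC
    · have h1 := hp t ⟨le_of_lt ht, htC⟩
      have h2 := mlow t ht htC
      have h3 : 0 ≤ K * (t / C) ^ n := by positivity
      have h4 := (abs_lt.mp h1).1
      linarith
    · have ht1 : 1 ≤ t := le_trans hC1 (le_of_lt htC)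
      have habs := poly_abs_eval_le p ht1
      have habs' : -(A * t ^ d) ≤ p.eval t := by
        have hna := neg_abs_le (p.eval t)
        rw [← hd, ← hA] at habs
        linarith
      have htC1 : 1 ≤ t / C := (one_le_div hC0).mpr (le_of_lt htC)
      have hpow : (t / C) ^ (d + 1) ≤ (t / C) ^ n := pow_le_pow_right₀ htC1 hnd
      have hKeq : K * (t / C) ^ (d + 1) = (A + 1) * t ^ (d + 1) := by
        rw [hK, div_pow]
        field_simp
      have hKt : (A + 1) * t ^ (d + 1) ≤ K * (t / C) ^ n := by
        rw [← hKeq]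
        exact mul_le_mul_of_nonneg_left hpow (le_of_lt hK0)
      have hlog : Real.log t ≤ t := le_trans (Real.log_le_sub_one_of_pos ht) (by linarith)
      have hlog0 : 0 ≤ Real.log t := Real.log_nonneg ht1
      have htd : t ^ d ≤ t ^ (d + 1) := pow_le_pow_right₀ ht1 (Nat.le_succ d)
      have htt : t ≤ t ^ (d + 1) := le_self_pow₀ ht1 (Nat.succ_ne_zero d)
      nlinarith [pow_nonneg (le_trans zero_le_one ht1) d]
  · intro t htI
    obtain ⟨ht0, htM⟩ := htI
    have heval : (p + Polynomial.C (K / C ^ n) * Polynomial.X ^ n).eval t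
        = p.eval t + K * (t / C) ^ n := by
      rw [Polynomial.eval_add, Polynomial.eval_mul, Polynomial.eval_C, Polynomial.eval_pow,
        Polynomial.eval_X, div_pow]
      ring
    rw [heval]
    have htC : t ≤ C := le_trans htM (le_of_lt hMC)
    have h1 := hp t ⟨ht0, htC⟩
    have h2 := mup t ht0 htM
    have hpow : (t / C) ^ n ≤ (M ^ 2 / C) ^ n := by
      apply pow_le_pow_left₀ (by positivity)
      gcongr
    have h3 : K * (t / C) ^ n ≤ m / 2 :=
      le_trans (mul_le_mul_of_nonneg_left hpow (le_of_lt hK0)) hsmall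
    have h4 := (abs_lt.mp h1).2
    linarith

/-- For every `ε > 0` and `M > 0` there is an even real polynomial `Q` with
`log r ≤ Q(r)` for all `r > 0` and `Q(r) ≤ (1/2) log(r² + ε)` on `[0, M]`. -/
theorem exists_even_polynomial_log_bounds (ε M : ℝ) (hε : 0 < ε) (hM : 0 < M) :
    ∃ Q : Polynomial ℝ,
      (∀ r : ℝ, Q.eval (-r) = Q.eval r) ∧
      (∀ r : ℝ, 0 < r → Real.log r ≤ Q.eval r) ∧
      (∀ r ∈ Set.Icc (0 : ℝ) M, Q.eval r ≤ Real.log (r ^ 2 + ε) / 2) := by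
  obtain ⟨P, hlow, hup⟩ := key_poly ε M hε hM
  refine ⟨P.comp (Polynomial.X ^ 2), ?_, ?_, ?_⟩
  · intro r
    rw [Polynomial.eval_comp, Polynomial.eval_comp]
    norm_num
  · intro r hr
    have h := hlow (r ^ 2) (by positivity)
    have hl : Real.log (r ^ 2) = 2 * Real.log r := by
      rw [Real.log_pow]; push_cast; ring
    rw [Polynomial.eval_comp, Polynomial.eval_pow, Polynomial.eval_X]
    rw [hl] at h
    linarith
  · intro r hr
    have h := hup (r ^ 2) ⟨by positivity, by nlinarith [hr.1, hr.2]⟩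
    rw [Polynomial.eval_comp, Polynomial.eval_pow, Polynomial.eval_X]
    exact h
end
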